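/- Let N ≥ 1 and R = ℤ[x]/(x^N+1). Let f' : ℤ_{2N} → ℤ be nega-cyclic, i.e., f'(k + N) = −f'(k) for all k ∈ ℤ_{2N}. Define the test polynomial T = Σ_{i=0}^{N−1} f'(−i) x^i ∈ R (equivalently Σ_i f'(i) x^{−i}). Then for every u ∈ ℤ_{2N}, the constant coefficient of T · x^u in R equals f'(u). -/

import Mathlib

open Polynomial

private lemma monicM (N : ℕ) (hN : 1 ≤ N) : ((X : ℤ[X]) ^ N + 1).Monic := by
  simpa using monic_X_pow_add_C (1 : ℤ) (by omega)

private lemma modkey (N : ℕ) (hN : 1 ≤ N) (p : ℤ[X]) :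
    (p * X ^ N) %ₘ (X ^ N + 1) = (-p) %ₘ (X ^ N + 1) := by
  have h : p * X ^ N = -p + (X ^ N + 1) * p := by ring
  rw [h, add_modByMonic, self_mul_modByMonic (monicM N hN), add_zero]

private lemma base_case (N u : ℕ) (hN : 1 ≤ N) (hu : u < N) (f' : ZMod (2 * N) → ℤ)
    (hf : ∀ k : ZMod (2 * N), f' (k + (N : ZMod (2 * N))) = - f' k) :
    (((∑ i ∈ Finset.range N, C (f' (-(i : ZMod (2 * N)))) * X ^ i) * X ^ u) %ₘ
        (X ^ N + 1)).coeff 0 = f' (u : ZMod (2 * N)) := by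
  set M : ℤ[X] := X ^ N + 1 with hM
  set A : ℤ[X] := ∑ i ∈ Finset.range (N - u), C (f' (-(i : ZMod (2 * N)))) * X ^ (i + u) with hA
  set B : ℤ[X] := ∑ i ∈ Finset.Ico (N - u) N, C (f' (-(i : ZMod (2 * N)))) * X ^ (i + u - N)
    with hB
  have hsplit : (∑ i ∈ Finset.range N, C (f' (-(i : ZMod (2 * N)))) * X ^ i) * X ^ u
      = (A - B) + M * B := by
    rw [Finset.sum_mul]
    have h1 : ∀ i ∈ Finset.range N, C (f' (-(i : ZMod (2 * N)))) * X ^ i * X ^ u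
        = C (f' (-(i : ZMod (2 * N)))) * X ^ (i + u) := by
      intro i _; rw [mul_assoc, ← pow_add]
    rw [Finset.sum_congr rfl h1, Finset.range_eq_Ico,
      ← Finset.sum_Ico_consecutive _ (Nat.zero_le (N - u)) (Nat.sub_le N u),
      ← Finset.range_eq_Ico]
    have h2 : ∑ i ∈ Finset.Ico (N - u) N, C (f' (-(i : ZMod (2 * N)))) * X ^ (i + u)
        = B * X ^ N := by
      rw [hB, Finset.sum_mul]
      refine Finset.sum_congr rfl fun i hi => ?_
      have hi' : N - u ≤ i := (Finset.mem_Ico.mp hi).1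
      rw [mul_assoc, ← pow_add]
      congr 2
      omega
    rw [h2, hM]
    ring
  have hdegA : A.degree < (N : WithBot ℕ) := by
    refine lt_of_le_of_lt (degree_sum_le _ _) ?_
    rw [Finset.sup_lt_iff (by exact_mod_cast WithBot.bot_lt_coe N)]
    intro i hi
    refine lt_of_le_of_lt (degree_mul_le _ _) ?_
    refine lt_of_le_of_lt (add_le_add degree_C_le le_rfl) ?_
    rw [degree_X_pow, zero_add]
    have hi' := Finset.mem_range.mp hi
    exact_mod_cast (by omega : i + u < N)
  have hdegB : B.degree < (N : WithBot ℕ) := by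
    refine lt_of_le_of_lt (degree_sum_le _ _) ?_
    rw [Finset.sup_lt_iff (by exact_mod_cast WithBot.bot_lt_coe N)]
    intro i hi
    refine lt_of_le_of_lt (degree_mul_le _ _) ?_
    refine lt_of_le_of_lt (add_le_add degree_C_le le_rfl) ?_
    rw [degree_X_pow, zero_add]
    have hi' := Finset.mem_Ico.mp hi
    exact_mod_cast (by omega : i + u - N < N)
  have hdeg : (A - B).degree < M.degree := by
    rw [hM]
    have : ((X : ℤ[X]) ^ N + 1).degree = (N : WithBot ℕ) := by
      simpa using degree_X_pow_add_C (by omega : 0 < N) (1 : ℤ)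
    rw [this]
    exact lt_of_le_of_lt (degree_sub_le _ _) (max_lt hdegA hdegB)
  have hmod : ((∑ i ∈ Finset.range N, C (f' (-(i : ZMod (2 * N)))) * X ^ i) * X ^ u) %ₘ M
      = A - B := by
    rw [hsplit, add_modByMonic, self_mul_modByMonic (monicM N hN), add_zero,
      (modByMonic_eq_self_iff (monicM N hN)).mpr hdeg]
  rw [hmod, coeff_sub]
  rcases Nat.eq_zero_or_pos u with rfl | hu0
  · have hBz : B = 0 := by
      rw [hB]; simp
    have hAc : A.coeff 0 = f' ((0 : ℕ) : ZMod (2 * N)) := by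
      rw [hA, finset_sum_coeff]
      simp only [coeff_C_mul, coeff_X_pow, Nat.add_zero, mul_ite, mul_one, mul_zero]
      rw [Finset.sum_ite_eq (Finset.range (N - 0)) 0, if_pos (Finset.mem_range.mpr (by omega))]
      norm_num
    simpa [hBz] using hAc
  · have hAc : A.coeff 0 = 0 := by
      rw [hA, finset_sum_coeff]
      refine Finset.sum_eq_zero fun i _ => ?_
      rw [coeff_C_mul, coeff_X_pow, if_neg (by omega : ¬ 0 = i + u), mul_zero]
    have hBc : B.coeff 0 = f' (((N - u : ℕ) : ZMod (2 * N))⁻¹ * 0 - ((N - u : ℕ) : ZMod (2 * N))) ∨ True := Or.inr trivial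
    have hBc' : B.coeff 0 = f' (-((N - u : ℕ) : ZMod (2 * N))) := by
      rw [hB, Finset.sum_Ico_eq_sum_range, finset_sum_coeff]
      have : ∀ j ∈ Finset.range (N - (N - u)),
          (C (f' (-((N - u + j : ℕ) : ZMod (2 * N)))) * X ^ (N - u + j + u - N)).coeff 0
          = if j = 0 then f' (-((N - u + j : ℕ) : ZMod (2 * N))) else 0 := by
        intro j hj
        have hj' : j < N - (N - u) := Finset.mem_range.mp hj
        rw [coeff_C_mul, coeff_X_pow]
        have : N - u + j + u - N = j := by omega
        rw [this]
        by_cases h : j = 0 <;> simp [h, eq_comm]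
      rw [Finset.sum_congr rfl this, Finset.sum_ite_eq' (Finset.range (N - (N - u))) 0,
        if_pos (Finset.mem_range.mpr (by omega))]
      simp
    rw [hAc, hBc', zero_sub]
    have hcast : -((N - u : ℕ) : ZMod (2 * N)) = (u : ZMod (2 * N)) + (N : ZMod (2 * N)) := by
      have h2N : ((2 * N : ℕ) : ZMod (2 * N)) = 0 := ZMod.natCast_self _
      have : ((N - u : ℕ) : ZMod (2 * N)) = (N : ZMod (2 * N)) - (u : ZMod (2 * N)) := by
        push_cast [Nat.cast_sub hu.le]; ring
      rw [this]
      have h2 : (N : ZMod (2 * N)) + (N : ZMod (2 * N)) = 0 := by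
        push_cast at h2N
        linear_combination h2N
      linear_combination -h2
    rw [hcast, hf]
    ring

theorem stmt_4 (N : ℕ) (hN : 1 ≤ N) (f' : ZMod (2 * N) → ℤ)
    (hf : ∀ k : ZMod (2 * N), f' (k + (N : ZMod (2 * N))) = - f' k) :
    ∀ u : ℕ,
      (((∑ i ∈ Finset.range N, C (f' (-(i : ZMod (2 * N)))) * X ^ i) * X ^ u) %ₘ
          (X ^ N + 1)).coeff 0 = f' (u : ZMod (2 * N)) := by
  intro u
  induction u using Nat.strong_induction_on with
  | _ u ih =>
    rcases lt_or_ge u N with h | h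
    · exact base_case N u hN h f' hf
    · obtain ⟨v, rfl⟩ : ∃ v, u = v + N := ⟨u - N, by omega⟩
      rw [pow_add, ← mul_assoc, modkey N hN, neg_modByMonic, coeff_neg,
        ih v (by omega)]
      have : ((v + N : ℕ) : ZMod (2 * N)) = (v : ZMod (2 * N)) + (N : ZMod (2 * N)) := by
        push_cast; ring
      rw [this, hf]
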